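/- Suppose there is a constant w̄ ≥ 0 such that Σ_{k=0}^{T−1} ‖w_k‖² ≤ T w̄² for all T ∈ ℕ. Then for every T ∈ ℕ the projected LMS one-step prediction errors satisfy Σ_{k=0}^{T−1} ‖D_k(θ* − θ̂_k)‖ ≤ T w̄ + √(T/μ) · ‖θ̂_0 − θ*‖. -/

import Mathlib

open Matrix Finset

/-- Euclidean norm of a vector in `ℝ^n`. -/
noncomputable def vnorm {n : ℕ} (v : Fin n → ℝ) : ℝ := Real.sqrt (∑ i, v i ^ 2)

/-- Spectral norm (ℓ²-operator norm) of a matrix. -/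
noncomputable def specNorm {n d : ℕ} (D : Matrix (Fin n) (Fin d) ℝ) : ℝ :=
  ‖LinearMap.toContinuousLinearMap (Matrix.toEuclideanLin D)‖

open RealInnerProductSpace

lemma vnorm_eq {m : ℕ} (v : Fin m → ℝ) :
    vnorm v = ‖(WithLp.equiv 2 (Fin m → ℝ)).symm v‖ := by
  rw [EuclideanSpace.norm_eq]
  simp [vnorm, Real.norm_eq_abs, sq_abs]

lemma mulVec_vnorm_le {n d : ℕ} (D : Matrix (Fin n) (Fin d) ℝ) (x : Fin d → ℝ) :
    vnorm (D.mulVec x) ≤ specNorm D * vnorm x := by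
  rw [vnorm_eq, vnorm_eq]
  have h := (LinearMap.toContinuousLinearMap (Matrix.toEuclideanLin D)).le_opNorm
    ((WithLp.equiv 2 (Fin d → ℝ)).symm x)
  simpa [specNorm] using h

lemma inner_eq_dot {m : ℕ} (a b : Fin m → ℝ) :
    (inner ℝ ((WithLp.equiv 2 (Fin m → ℝ)).symm a) ((WithLp.equiv 2 (Fin m → ℝ)).symm b) : ℝ) = a ⬝ᵥ b := by
  simp [PiLp.inner_apply, RCLike.inner_apply, dotProduct, mul_comm]

lemma vnorm_sq_eq_dot {m : ℕ} (v : Fin m → ℝ) : vnorm v ^ 2 = v ⬝ᵥ v := by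
  rw [vnorm_eq, ← inner_eq_dot, real_inner_self_eq_norm_sq]

lemma transpose_vnorm_le {n d : ℕ} (D : Matrix (Fin n) (Fin d) ℝ) (v : Fin n → ℝ) :
    vnorm (Dᵀ.mulVec v) ≤ specNorm D * vnorm v := by
  set y := Dᵀ.mulVec v with hy
  have h1 : y ⬝ᵥ y = v ⬝ᵥ (D.mulVec y) := by
    rw [Matrix.dotProduct_mulVec, ← Matrix.mulVec_transpose, Matrix.transpose_transpose, dotProduct_comm]
  have h2 : v ⬝ᵥ (D.mulVec y) ≤ vnorm v * vnorm (D.mulVec y) := by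
    rw [← inner_eq_dot, vnorm_eq, vnorm_eq]
    exact real_inner_le_norm _ _
  have h3 := mulVec_vnorm_le D y
  have h4 : vnorm y ^ 2 ≤ vnorm v * (specNorm D * vnorm y) := by
    rw [vnorm_sq_eq_dot, h1]
    calc v ⬝ᵥ (D.mulVec y) ≤ vnorm v * vnorm (D.mulVec y) := h2
    _ ≤ vnorm v * (specNorm D * vnorm y) := by
        apply mul_le_mul_of_nonneg_left h3
        rw [vnorm_eq]; positivity
  rcases eq_or_lt_of_le (show (0:ℝ) ≤ vnorm y by rw [vnorm_eq]; positivity) with h | h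
  · rw [← h]; have : 0 ≤ specNorm D := norm_nonneg _
    have : 0 ≤ vnorm v := by rw [vnorm_eq]; positivity
    positivity
  · nlinarith

lemma nonneg_of_forall_eps {c M : ℝ} (hM : 0 ≤ M)
    (h : ∀ ε : ℝ, 0 < ε → ε ≤ 1 → 0 ≤ 2 * c + ε * M) : 0 ≤ c := by
  by_contra hc
  push_neg at hc
  rcases eq_or_lt_of_le hM with h0 | h0
  · have := h 1 one_pos le_rfl; nlinarith
  · have hε : 0 < min 1 (-c / M) := lt_min one_pos (div_pos (by linarith) h0)
    have := h _ hε (min_le_left _ _)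
    have h2 : min 1 (-c / M) ≤ -c / M := min_le_right _ _
    have h3 : min 1 (-c / M) * M ≤ -c := by
      rw [le_div_iff₀ h0] at h2
      linarith
    nlinarith

lemma proj_contract_gen {E : Type*} [NormedAddCommGroup E] [InnerProductSpace ℝ E]
    {K : Set E} (hK : Convex ℝ K) {a x t : E} (ha : a ∈ K) (ht : t ∈ K)
    (hmin : ∀ θ ∈ K, ‖a - x‖ ≤ ‖θ - x‖) : ‖a - t‖ ≤ ‖x - t‖ := by
  have key : 0 ≤ ⟪a - x, t - a⟫ := by
    refine nonneg_of_forall_eps (M := ‖t - a‖ ^ 2) (by positivity) ?_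
    intro ε hε hε1
    have hmem : a + ε • (t - a) ∈ K := by
      have := hK ha ht (by linarith : (0:ℝ) ≤ 1 - ε) hε.le (by ring)
      convert this using 1
      module
    have h1 := hmin _ hmem
    have h2 : ‖a - x‖ ^ 2 ≤ ‖a + ε • (t - a) - x‖ ^ 2 := by
      apply pow_le_pow_left₀ (norm_nonneg _) h1
    have h3 : a + ε • (t - a) - x = (a - x) + ε • (t - a) := by module
    rw [h3, norm_add_sq_real] at h2
    rw [real_inner_smul_right, norm_smul, Real.norm_eq_abs, abs_of_pos hε] at h2
    have h4 : 0 ≤ 2 * (ε * ⟪a - x, t - a⟫) + (ε * ‖t - a‖) ^ 2 := by nlinarith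
    have h5 : 0 ≤ ε * (2 * ⟪a - x, t - a⟫ + ε * ‖t - a‖ ^ 2) := by nlinarith
    nlinarith [mul_pos hε hε]
  have expand : ‖x - t‖ ^ 2 = ‖x - a‖ ^ 2 + 2 * ⟪a - x, t - a⟫ + ‖t - a‖ ^ 2 := by
    have : x - t = (x - a) - (t - a) := by module
    rw [this, norm_sub_sq_real]
    have : ⟪x - a, t - a⟫ = - ⟪a - x, t - a⟫ := by
      rw [← inner_neg_left]; congr 1; module
    rw [this]; ring
  have h6 : ‖a - t‖ ^ 2 ≤ ‖x - t‖ ^ 2 := by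
    have : ‖a - t‖ = ‖t - a‖ := by rw [norm_sub_rev]
    rw [this, expand]; nlinarith [norm_nonneg (x - a)]
  have := Real.sqrt_le_sqrt h6
  rwa [Real.sqrt_sq (norm_nonneg _), Real.sqrt_sq (norm_nonneg _)] at this

lemma descent_step {n d : ℕ} {μ : ℝ} (hμ : 0 < μ) (D : Matrix (Fin n) (Fin d) ℝ)
    (hD : μ * specNorm D ^ 2 ≤ 1) (b : Fin d → ℝ) (wk : Fin n → ℝ) :
    vnorm (b + μ • Dᵀ.mulVec (D.mulVec (-b) + wk)) ^ 2 ≤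
      vnorm b ^ 2 + μ * (vnorm wk ^ 2 - vnorm (D.mulVec (-b)) ^ 2) := by
  set p := D.mulVec (-b) with hp
  set v := p + wk with hv
  set c := Dᵀ.mulVec v with hc
  have expand : (b + μ • c) ⬝ᵥ (b + μ • c)
      = b ⬝ᵥ b + 2 * μ * (b ⬝ᵥ c) + μ ^ 2 * (c ⬝ᵥ c) := by
    simp only [add_dotProduct, dotProduct_add, smul_dotProduct, dotProduct_smul,
      smul_eq_mul, dotProduct_comm c b]
    ring
  have hbc : b ⬝ᵥ c = -(p ⬝ᵥ v) := by
    rw [hc, Matrix.dotProduct_mulVec, Matrix.vecMul_transpose, hp, Matrix.mulVec_neg,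
      neg_dotProduct, neg_neg]
  have hcc : μ ^ 2 * (c ⬝ᵥ c) ≤ μ * (v ⬝ᵥ v) := by
    have h1 : vnorm c ≤ specNorm D * vnorm v := transpose_vnorm_le D v
    have hc0 : 0 ≤ vnorm c := Real.sqrt_nonneg _
    have hv0 : 0 ≤ vnorm v := Real.sqrt_nonneg _
    have h2 : c ⬝ᵥ c ≤ specNorm D ^ 2 * (v ⬝ᵥ v) := by
      rw [← vnorm_sq_eq_dot, ← vnorm_sq_eq_dot]; nlinarith
    have h3 : 0 ≤ v ⬝ᵥ v := by rw [← vnorm_sq_eq_dot]; positivity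
    calc μ ^ 2 * (c ⬝ᵥ c) ≤ μ ^ 2 * (specNorm D ^ 2 * (v ⬝ᵥ v)) := by
          exact mul_le_mul_of_nonneg_left h2 (sq_nonneg μ)
      _ = μ * specNorm D ^ 2 * (μ * (v ⬝ᵥ v)) := by ring
      _ ≤ 1 * (μ * (v ⬝ᵥ v)) := by
          apply mul_le_mul_of_nonneg_right hD; positivity
      _ = μ * (v ⬝ᵥ v) := one_mul _
  have hwk : v ⬝ᵥ v - 2 * (p ⬝ᵥ v) = wk ⬝ᵥ wk - p ⬝ᵥ p := by
    rw [hv]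
    simp only [add_dotProduct, dotProduct_add, dotProduct_comm wk p]
    ring
  rw [vnorm_sq_eq_dot, vnorm_sq_eq_dot, vnorm_sq_eq_dot, vnorm_sq_eq_dot, expand, hbc]
  have h5 : μ * (v ⬝ᵥ v - 2 * (p ⬝ᵥ v)) = μ * (wk ⬝ᵥ wk - p ⬝ᵥ p) := by rw [hwk]
  linarith

lemma vnorm_sub_eq {m : ℕ} (u v : Fin m → ℝ) :
    vnorm (u - v) = ‖(WithLp.linearEquiv 2 ℝ (Fin m → ℝ)).symm u
      - (WithLp.linearEquiv 2 ℝ (Fin m → ℝ)).symm v‖ := by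
  rw [← map_sub, vnorm_eq]; rfl

lemma proj_contract_pi {d : ℕ} {Θ : Set (Fin d → ℝ)} (hΘ : Convex ℝ Θ)
    {a x t : Fin d → ℝ} (ha : a ∈ Θ) (ht : t ∈ Θ)
    (hmin : ∀ θ ∈ Θ, vnorm (a - x) ≤ vnorm (θ - x)) :
    vnorm (a - t) ≤ vnorm (x - t) := by
  set ι := (WithLp.linearEquiv 2 ℝ (Fin d → ℝ)).symm with hι
  have hconv : Convex ℝ (ι '' Θ) := hΘ.linear_image ι.toLinearMap
  have key := proj_contract_gen (E := EuclideanSpace ℝ (Fin d)) hconv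
    (a := ι a) (x := ι x) (t := ι t) ⟨a, ha, rfl⟩ ⟨t, ht, rfl⟩ ?_
  · rw [vnorm_sub_eq, vnorm_sub_eq]; exact key
  · rintro θ' ⟨θ, hθ, rfl⟩
    rw [← vnorm_sub_eq, ← vnorm_sub_eq]
    exact hmin θ hθ

lemma sqrt_add_le (a b : ℝ) (ha : 0 ≤ a) (hb : 0 ≤ b) :
    Real.sqrt (a + b) ≤ Real.sqrt a + Real.sqrt b := by
  rw [show a + b = a + b from rfl]
  have h : a + b ≤ (Real.sqrt a + Real.sqrt b) ^ 2 := by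
    have := Real.sq_sqrt ha; have := Real.sq_sqrt hb
    nlinarith [Real.sqrt_nonneg a, Real.sqrt_nonneg b]
  calc Real.sqrt (a + b) ≤ Real.sqrt ((Real.sqrt a + Real.sqrt b) ^ 2) := Real.sqrt_le_sqrt h
  _ = Real.sqrt a + Real.sqrt b := Real.sqrt_sq (by positivity)


/-- transient bound on the cumulated LMS prediction error
under point-wise bounded disturbances. -/
theorem lms_prediction_error_transient_bound
    {d n : ℕ} (hd : 1 ≤ d) (hn : 1 ≤ n)
    (Θ : Set (Fin d → ℝ)) (hΘne : Θ.Nonempty) (hΘcomp : IsCompact Θ) (hΘconv : Convex ℝ Θ)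
    (θstar : Fin d → ℝ) (hθstar : θstar ∈ Θ)
    (μ : ℝ) (hμ : 0 < μ)
    (D : ℕ → Matrix (Fin n) (Fin d) ℝ) (hD : ∀ k, μ * specNorm (D k) ^ 2 ≤ 1)
    (w : ℕ → (Fin n → ℝ))
    (θhat θtil : ℕ → (Fin d → ℝ))
    (hθ0 : θhat 0 ∈ Θ)
    (hupd : ∀ k, θtil (k + 1) =
      θhat k + μ • (D k)ᵀ.mulVec ((D k).mulVec (θstar - θhat k) + w k))
    (hproj_mem : ∀ k, θhat (k + 1) ∈ Θ)
    (hproj : ∀ k, ∀ θ ∈ Θ, vnorm (θhat (k + 1) - θtil (k + 1)) ≤ vnorm (θ - θtil (k + 1)))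
    (wbar : ℝ) (hwbar : 0 ≤ wbar)
    (hw : ∀ T : ℕ, ∑ k ∈ Finset.range T, vnorm (w k) ^ 2 ≤ T * wbar ^ 2) :
    ∀ T : ℕ,
      ∑ k ∈ Finset.range T, vnorm ((D k).mulVec (θstar - θhat k)) ≤
        T * wbar + Real.sqrt ((T : ℝ) / μ) * vnorm (θhat 0 - θstar) := by
  set p : ℕ → Fin n → ℝ := fun k => (D k).mulVec (θstar - θhat k) with hpdef
  set V : ℕ → ℝ := fun k => vnorm (θhat k - θstar) ^ 2 with hVdef
  have vnn : ∀ {m : ℕ} (v : Fin m → ℝ), 0 ≤ vnorm v := fun v => Real.sqrt_nonneg _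
  -- one-step inequality
  have step : ∀ k, V (k + 1) + μ * vnorm (p k) ^ 2 ≤ V k + μ * vnorm (w k) ^ 2 := by
    intro k
    have hneg : θstar - θhat k = -(θhat k - θstar) := by abel
    have htil : vnorm (θtil (k + 1) - θstar) ^ 2 ≤
        V k + μ * (vnorm (w k) ^ 2 - vnorm (p k) ^ 2) := by
      have h := descent_step hμ (D k) (hD k) (θhat k - θstar) (w k)
      rw [← hneg] at h
      have heq : θtil (k + 1) - θstar =
          θhat k - θstar + μ • (D k)ᵀ.mulVec ((D k).mulVec (θstar - θhat k) + w k) := by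
        rw [hupd k]; abel
      rw [heq]
      exact h
    have hcontr : vnorm (θhat (k + 1) - θstar) ≤ vnorm (θtil (k + 1) - θstar) :=
      proj_contract_pi hΘconv (hproj_mem k) hθstar (hproj k)
    have hsq : V (k + 1) ≤ vnorm (θtil (k + 1) - θstar) ^ 2 :=
      pow_le_pow_left₀ (vnn _) hcontr 2
    have := hsq.trans htil
    linarith
  -- telescoping
  have tele : ∀ T : ℕ, V T + μ * ∑ k ∈ Finset.range T, vnorm (p k) ^ 2 ≤
      V 0 + μ * ∑ k ∈ Finset.range T, vnorm (w k) ^ 2 := by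
    intro T
    induction T with
    | zero => simp
    | succ T ih =>
      rw [Finset.sum_range_succ, Finset.sum_range_succ]
      have := step T
      nlinarith
  intro T
  have hS2 : ∑ k ∈ Finset.range T, vnorm (p k) ^ 2 ≤ V 0 / μ + T * wbar ^ 2 := by
    have h1 := tele T
    have h2 := hw T
    have h3 : 0 ≤ V T := by positivity
    have h4 : μ * ∑ k ∈ Finset.range T, vnorm (p k) ^ 2 ≤ V 0 + μ * (T * wbar ^ 2) := by
      nlinarith [mul_le_mul_of_nonneg_left h2 hμ.le]
    have h5 : ∑ k ∈ Finset.range T, vnorm (p k) ^ 2 ≤ (V 0 + μ * (↑T * wbar ^ 2)) / μ := by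
      rw [le_div_iff₀ hμ]
      nlinarith
    have h6 : (V 0 + μ * (↑T * wbar ^ 2)) / μ = V 0 / μ + ↑T * wbar ^ 2 := by
      field_simp
    linarith
  -- Cauchy-Schwarz
  have hCS : (∑ k ∈ Finset.range T, vnorm (p k)) ^ 2 ≤
      T * ∑ k ∈ Finset.range T, vnorm (p k) ^ 2 := by
    have h := Finset.sum_mul_sq_le_sq_mul_sq (Finset.range T) (fun _ => (1:ℝ))
      (fun k => vnorm (p k))
    simpa using h
  have hsum_nn : 0 ≤ ∑ k ∈ Finset.range T, vnorm (p k) :=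
    Finset.sum_nonneg fun k _ => vnn _
  have hfin : ∑ k ∈ Finset.range T, vnorm (p k) ≤
      Real.sqrt ((T : ℝ) ^ 2 * wbar ^ 2 + (T : ℝ) / μ * V 0) := by
    rw [← Real.sqrt_sq hsum_nn]
    apply Real.sqrt_le_sqrt
    calc (∑ k ∈ Finset.range T, vnorm (p k)) ^ 2
        ≤ T * ∑ k ∈ Finset.range T, vnorm (p k) ^ 2 := hCS
      _ ≤ T * (V 0 / μ + T * wbar ^ 2) := by
          apply mul_le_mul_of_nonneg_left hS2 (Nat.cast_nonneg T)
      _ = (T : ℝ) ^ 2 * wbar ^ 2 + (T : ℝ) / μ * V 0 := by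
          field_simp; ring
  calc ∑ k ∈ Finset.range T, vnorm (p k)
      ≤ Real.sqrt ((T : ℝ) ^ 2 * wbar ^ 2 + (T : ℝ) / μ * V 0) := hfin
    _ ≤ Real.sqrt ((T : ℝ) ^ 2 * wbar ^ 2) + Real.sqrt ((T : ℝ) / μ * V 0) := by
        apply sqrt_add_le <;> positivity
    _ = T * wbar + Real.sqrt ((T : ℝ) / μ) * vnorm (θhat 0 - θstar) := by
        rw [show (T : ℝ) ^ 2 * wbar ^ 2 = ((T : ℝ) * wbar) ^ 2 by ring,
          Real.sqrt_sq (by positivity), Real.sqrt_mul (by positivity),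
          hVdef, Real.sqrt_sq (vnn _)]
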